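/- For each n ≥ 2, the formula Wid_n^+ is valid in every frame H_m of the family (H_m)_{m∈ω}, where H_m = ⟨{a} ∪ B_m ∪ C_m, E_m⟩ with C_m = {k : k ≤ m+1}, B_m = {X ⊆ C_m : |X| = 2}, and E_m = {(a,u) : u ∈ B_m ∪ C_m} ∪ {(b,c) ∈ B_m × C_m : c ∈ b}. -/

import Mathlib

/-- A Kripke frame: a set of worlds with a binary relation. -/
structure Frame where
  World : Type
  rel : World → World → Prop

/-- `f` is a reduction (surjective p-morphism) of `F` to `G`. -/
def Reduction (F G : Frame) (f : F.World → G.World) : Prop :=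
  Function.Surjective f ∧
  (∀ w u, F.rel w u → G.rel (f w) (f u)) ∧
  (∀ w v, G.rel (f w) v → ∃ u, F.rel w u ∧ f u = v)

/-- `F` is reducible to `G`. -/
def Reducible (F G : Frame) : Prop := ∃ f, Reduction F G f

/-- The subframe of `F` generated by the point `w`. -/
def Frame.genSub (F : Frame) (w : F.World) : Frame :=
  ⟨{v // Relation.ReflTransGen F.rel w v}, fun a b => F.rel a.1 b.1⟩

/-- The worlds of the frame `H n`: the root `a` (encoded `none`), the
two-element subsets of `C n = {0, …, n+1}` (the set `B n`), and the elements of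
`C n` itself. -/
def HWorld (n : ℕ) : Type := Option (({s : Finset (Fin (n + 2)) // s.card = 2}) ⊕ Fin (n + 2))

/-- The relation of the frame `H n`: the root sees everything else, and a
two-element set `b ∈ B n` sees exactly its two elements. -/
def Hrel (n : ℕ) : HWorld n → HWorld n → Prop := fun x y =>
  match x, y with
  | none, some _ => True
  | some (Sum.inl b), some (Sum.inr c) => c ∈ b.1
  | _, _ => False

/-- The frame `H n`. -/
def HFrame (n : ℕ) : Frame := ⟨HWorld n, Hrel n⟩

/-- Modal formulas over countably many propositional variables. -/
inductive Formula where
  | var : ℕ → Formula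
  | bot : Formula
  | imp : Formula → Formula → Formula
  | box : Formula → Formula
deriving DecidableEq

namespace Formula

def neg (a : Formula) : Formula := .imp a .bot
def top : Formula := .imp .bot .bot
def and (a b : Formula) : Formula := neg (.imp a (neg b))
def or (a b : Formula) : Formula := .imp (neg a) b
def dia (a : Formula) : Formula := neg (.box (neg a))

/-- Finite conjunction of a list of formulas. -/
def bigConj (l : List Formula) : Formula := l.foldr and top

/-- Finite disjunction of a list of formulas. -/
def bigDisj (l : List Formula) : Formula := l.foldr or .bot

end Formula

/-- Kripke satisfaction of a formula at a world of `F` under valuation `V`. -/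
def Sat (F : Frame) (V : ℕ → F.World → Prop) : F.World → Formula → Prop
  | w, .var n => V n w
  | _, .bot => False
  | w, .imp a b => Sat F V w a → Sat F V w b
  | w, .box a => ∀ u, F.rel w u → Sat F V u a

/-- `φ` is valid at the point `w` of `F` (true under all valuations). -/
def SatAll (F : Frame) (w : F.World) (φ : Formula) : Prop := ∀ V, Sat F V w φ

/-- `φ` is valid in the frame `F`. -/
def Valid (F : Frame) (φ : Formula) : Prop := ∀ V w, Sat F V w φ

/-- The weak width formula `Wid_n^+`, with `q` encoded as variable `0` and
`p_i` as variable `i+1`: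
`q ∧ ◇(□¬q ∧ ⋀_{i≤n} ◇p_i) → ⋁_{0 ≤ i ≠ j ≤ n} ◇(p_i ∧ (p_j ∨ ◇p_j))`. -/
def widPlus (n : ℕ) : Formula :=
  .imp
    (.and (.var 0)
      (Formula.dia (.and (.box (Formula.neg (.var 0)))
        (Formula.bigConj ((List.finRange (n + 1)).map fun i => Formula.dia (.var (i + 1)))))))
    (Formula.bigDisj ((List.finRange (n + 1)).flatMap fun i =>
      (List.finRange (n + 1)).flatMap fun j =>
        if i = j then []
        else [Formula.dia (.and (.var (i + 1))
          (.or (.var (j + 1)) (Formula.dia (.var (j + 1)))))]))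

lemma sat_imp {F : Frame} {V w a b} :
    Sat F V w (.imp a b) ↔ (Sat F V w a → Sat F V w b) := Iff.rfl

lemma sat_and {F : Frame} {V w a b} :
    Sat F V w (Formula.and a b) ↔ Sat F V w a ∧ Sat F V w b := by
  simp only [Formula.and, Formula.neg, Sat]
  tauto

lemma sat_or {F : Frame} {V w a b} :
    Sat F V w (Formula.or a b) ↔ Sat F V w a ∨ Sat F V w b := by
  simp only [Formula.or, Formula.neg, Sat]
  tauto

lemma sat_dia {F : Frame} {V w a} :
    Sat F V w (Formula.dia a) ↔ ∃ u, F.rel w u ∧ Sat F V u a := by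
  simp only [Formula.dia, Formula.neg, Sat]
  constructor
  · intro h
    by_contra hc
    exact h fun u hr hs => hc ⟨u, hr, hs⟩
  · rintro ⟨u, hr, hs⟩ h
    exact h u hr hs

lemma sat_bigConj {F : Frame} {V w} (l : List Formula) :
    Sat F V w (Formula.bigConj l) ↔ ∀ φ ∈ l, Sat F V w φ := by
  induction l with
  | nil => simp [Formula.bigConj, Formula.top, Sat]
  | cons a t ih =>
    simp only [Formula.bigConj, List.foldr] at *
    rw [sat_and, ih]
    simp

lemma sat_bigDisj {F : Frame} {V w} (l : List Formula) :
    Sat F V w (Formula.bigDisj l) ↔ ∃ φ ∈ l, Sat F V w φ := by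
  induction l with
  | nil => simp [Formula.bigDisj, Sat]
  | cons a t ih =>
    simp only [Formula.bigDisj, List.foldr] at *
    rw [sat_or, ih]
    simp

/-- For each `n ≥ 2`, the formula `Wid_n^+` is valid in every frame `H m`. -/
theorem widPlus_valid_in_hframes (n : ℕ) (hn : 2 ≤ n) (m : ℕ) :
    Valid (HFrame m) (widPlus n) := by
  intro V w
  rw [widPlus, sat_imp]
  intro h
  rw [sat_and] at h
  obtain ⟨hq, hdia⟩ := h
  rw [sat_dia] at hdia
  obtain ⟨u, hwu, hu⟩ := hdia
  rw [sat_and] at hu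
  obtain ⟨hbox, hconj⟩ := hu
  rw [sat_bigConj] at hconj
  have hwit : ∀ i : Fin (n+1), ∃ c, (HFrame m).rel u c ∧
      Sat (HFrame m) V c (.var (i+1)) := by
    intro i
    have := hconj (Formula.dia (.var (↑i+1)))
      (List.mem_map.mpr ⟨↑i, by simp, rfl⟩)
    exact sat_dia.mp this
  have key : ∀ i j : Fin (n+1), i ≠ j → ∀ c : Fin (m+2),
      Sat (HFrame m) V (some (Sum.inr c)) (.var (↑i+1)) →
      Sat (HFrame m) V (some (Sum.inr c)) (.var (↑j+1)) →
      Sat (HFrame m) V (none : HWorld m)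
        (Formula.bigDisj ((List.finRange (n + 1)).flatMap fun i =>
          (List.finRange (n + 1)).flatMap fun j =>
            if i = j then []
            else [Formula.dia (.and (.var (i + 1))
              (.or (.var (j + 1)) (Formula.dia (.var (j + 1)))))])) := by
    intro i j hij c hpi hpj
    refine (sat_bigDisj _).mpr ?_
    refine ⟨Formula.dia (.and (.var (↑i + 1))
      (.or (.var (↑j + 1)) (Formula.dia (.var (↑j + 1))))), ?_, ?_⟩
    · exact List.mem_flatMap.mpr ⟨i, by simp,
        List.mem_flatMap.mpr ⟨j, by simp, by simp [hij, Fin.val_inj]⟩⟩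
    · refine sat_dia.mpr ?_
      refine ⟨some (Sum.inr c), trivial, ?_⟩
      refine sat_and.mpr ?_
      exact ⟨hpi, sat_or.mpr (Or.inl hpj)⟩
  match u, hwu, hwit with
  | none, hwu, _ =>
    rcases w with _ | (_ | _) <;> exact hwu.elim
  | some (Sum.inr c), _, hwit =>
    obtain ⟨c', hc', _⟩ := hwit ⟨0, by omega⟩
    rcases c' with _ | (_ | _) <;> exact hc'.elim
  | some (Sum.inl b), hwu, hwit =>
    -- w must be the root
    rcases w with _ | (_ | _)
    case some.inl => exact hwu.elim
    case some.inr => exact hwu.elim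
    case none =>
    obtain ⟨c0', hc0, hp0⟩ := hwit ⟨0, by omega⟩
    obtain ⟨c1', hc1, hp1⟩ := hwit ⟨1, by omega⟩
    obtain ⟨c2', hc2, hp2⟩ := hwit ⟨2, by omega⟩
    rcases c0' with _ | (_ | c0)
    · exact hc0.elim
    · exact hc0.elim
    rcases c1' with _ | (_ | c1)
    · exact hc1.elim
    · exact hc1.elim
    rcases c2' with _ | (_ | c2)
    · exact hc2.elim
    · exact hc2.elim
    -- hc0 hc1 hc2 : ci ∈ b.1, card b.1 = 2
    by_cases h01 : c0 = c1
    · subst h01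
      exact key ⟨0, by omega⟩ ⟨1, by omega⟩ (by simp [Fin.ext_iff]) c0 hp0 hp1
    · have hsub : ({c0, c1} : Finset (Fin (m+2))) ⊆ b.1 := by
        intro x hx
        simp only [Finset.mem_insert, Finset.mem_singleton] at hx
        rcases hx with rfl | rfl
        · exact hc0
        · exact hc1
      have heq : ({c0, c1} : Finset (Fin (m+2))) = b.1 :=
        Finset.eq_of_subset_of_card_le hsub (by
          rw [b.2, Finset.card_insert_of_notMem (by simpa using h01),
            Finset.card_singleton])
      have : c2 ∈ ({c0, c1} : Finset (Fin (m+2))) := heq ▸ hc2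
      simp only [Finset.mem_insert, Finset.mem_singleton] at this
      rcases this with rfl | rfl
      · exact key ⟨0, by omega⟩ ⟨2, by omega⟩ (by simp [Fin.ext_iff]) c2 hp0 hp2
      · exact key ⟨1, by omega⟩ ⟨2, by omega⟩ (by simp [Fin.ext_iff]) c2 hp1 hp2
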